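/- Let d ≥ 1 and let K ⊂ ℝ^d be a compact set. Then there exist constants C > 0 and α₀ > 0 such that for all α ∈ (0, α₀) and all z, w ∈ K, one has |δ_α(z,w) − α·|z − w|| ≤ C·α². -/

import Mathlib

open Real

private lemma sinh_le_mul_cosh' {x : ℝ} (hx : 0 ≤ x) : Real.sinh x ≤ x * Real.cosh x := by
  have hdiff : Differentiable ℝ (fun y : ℝ => y * Real.cosh y - Real.sinh y) :=
    (differentiable_id.mul Real.differentiable_cosh).sub Real.differentiable_sinh
  have hmono : MonotoneOn (fun y : ℝ => y * Real.cosh y - Real.sinh y) (Set.Ici 0) := by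
    apply monotoneOn_of_deriv_nonneg (convex_Ici 0) hdiff.continuous.continuousOn
      hdiff.differentiableOn
    intro y hy
    rw [interior_Ici, Set.mem_Ioi] at hy
    have h1 : HasDerivAt (fun y : ℝ => y * Real.cosh y - Real.sinh y)
        (1 * Real.cosh y + y * Real.sinh y - Real.cosh y) y :=
      ((hasDerivAt_id y).mul (Real.hasDerivAt_cosh y)).sub (Real.hasDerivAt_sinh y)
    rw [h1.deriv]
    have : 0 ≤ Real.sinh y := Real.sinh_nonneg_iff.2 hy.le
    nlinarith
  have := hmono (Set.self_mem_Ici) (Set.mem_Ici.2 hx) hx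
  simp only [Real.cosh_zero, Real.sinh_zero, mul_one, zero_mul, sub_zero] at this
  linarith

private lemma cosh_half_sq' (x : ℝ) : Real.cosh x = 1 + 2 * Real.sinh (x / 2) ^ 2 := by
  have h := Real.cosh_two_mul (x / 2)
  rw [show 2 * (x / 2) = x by ring] at h
  rw [h, Real.cosh_sq]; ring

private lemma sinh_half_bounds' (x : ℝ) : (x / 2) ^ 2 ≤ Real.sinh (x / 2) ^ 2 ∧
    Real.sinh (x / 2) ^ 2 ≤ (x / 2) ^ 2 * Real.cosh (x / 2) ^ 2 := by
  have h1 : |x / 2| ≤ Real.sinh |x / 2| := Real.self_le_sinh_iff.2 (abs_nonneg _)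
  have h2 : Real.sinh |x / 2| ≤ |x / 2| * Real.cosh |x / 2| := sinh_le_mul_cosh' (abs_nonneg _)
  have h3 : |Real.sinh (x / 2)| = Real.sinh |x / 2| := Real.abs_sinh _
  have h4 : Real.cosh |x / 2| = Real.cosh (x / 2) := Real.cosh_abs _
  have h5 : Real.sinh (x / 2) ^ 2 = Real.sinh |x / 2| ^ 2 := by rw [← h3, sq_abs]
  have h6 : (x / 2) ^ 2 = |x / 2| ^ 2 := (sq_abs _).symm
  have h0 : (0:ℝ) ≤ |x / 2| := abs_nonneg _
  constructor
  · rw [h5, h6]; nlinarith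
  · rw [h5, h6, ← h4]; nlinarith [Real.one_le_cosh |x / 2|]

private lemma one_add_half_sq_le_cosh' (x : ℝ) : 1 + x ^ 2 / 2 ≤ Real.cosh x := by
  have h := (sinh_half_bounds' x).1
  rw [cosh_half_sq' x]; nlinarith

private lemma cosh_le_one_add_sq' {x : ℝ} (hx : |x| ≤ 1) : Real.cosh x ≤ 1 + x ^ 2 := by
  have h := (sinh_half_bounds' x).2
  have hsq : Real.cosh (x / 2) ^ 2 = (Real.cosh x + 1) / 2 := by
    have h2 := cosh_half_sq' x
    have h3 := Real.cosh_sq (x / 2)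
    nlinarith
  have hx2 : x ^ 2 ≤ 1 := by nlinarith [sq_abs x, abs_nonneg x]
  have hc := Real.one_le_cosh x
  have hcx := cosh_half_sq' x
  rw [hsq] at h
  nlinarith [sq_nonneg (Real.sinh (x / 2))]

private lemma cosh_le_taylor' {x : ℝ} (hx : |x| ≤ 2) : Real.cosh x ≤ 1 + x ^ 2 / 2 + x ^ 4 := by
  set y := |x| / 2 with hy
  have hy0 : 0 ≤ y := by positivity
  have hy1 : y ≤ 1 := by rw [hy]; linarith
  have hcx : Real.cosh x = 1 + 2 * Real.sinh y ^ 2 := by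
    rw [← Real.cosh_abs x, cosh_half_sq' |x|]
  have hs1 : Real.sinh y ≤ y * Real.cosh y := sinh_le_mul_cosh' hy0
  have hs0 : 0 ≤ Real.sinh y := Real.sinh_nonneg_iff.2 hy0
  have hc : Real.cosh y ≤ 1 + y ^ 2 := cosh_le_one_add_sq' (by rwa [abs_of_nonneg hy0])
  have hs2 : Real.sinh y ≤ y + y ^ 3 := by nlinarith
  have hs3 : Real.sinh y ^ 2 ≤ (y + y ^ 3) ^ 2 := by nlinarith
  have hx2 : x ^ 2 = 4 * y ^ 2 := by rw [hy, ← sq_abs x]; ring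
  have hx4 : x ^ 4 = 16 * y ^ 4 := by rw [show (4:ℕ) = 2*2 by rfl, pow_mul, hx2]; ring
  have hy2 : y ^ 2 ≤ 1 := by nlinarith
  have hy6 : y ^ 6 ≤ y ^ 4 := by nlinarith [pow_nonneg hy0 4]
  rw [hcx, hx2, hx4]
  nlinarith [pow_nonneg hy0 4]

set_option maxHeartbeats 1000000 in
/-- First–order expansion of the rescaled hyperbolic distance on a
compact set: `|δ_α(z,w) − α|z−w|| ≤ C α²` for all small `α > 0` and `z, w ∈ K`.
Here `D = δ_α(z,w)` is the unique `D ≥ 0` with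
`cosh D = cosh(α|z|)cosh(α|w|) − sinh(α|z|)sinh(α|w|)·cos γ(z,w)`. -/
theorem stmt_2 (d : ℕ) (hd : 1 ≤ d)
    (K : Set (EuclideanSpace ℝ (Fin d))) (hK : IsCompact K) :
    ∃ C > 0, ∃ α₀ > 0, ∀ α ∈ Set.Ioo (0 : ℝ) α₀, ∀ z ∈ K, ∀ w ∈ K, ∀ D : ℝ,
      0 ≤ D →
      Real.cosh D =
        Real.cosh (α * ‖z‖) * Real.cosh (α * ‖w‖) -
          Real.sinh (α * ‖z‖) * Real.sinh (α * ‖w‖) *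
            ((inner ℝ z w : ℝ) / (‖z‖ * ‖w‖)) →
      |D - α * ‖z - w‖| ≤ C * α ^ 2 := by
  obtain ⟨R₀, hR₀⟩ := hK.isBounded.exists_norm_le
  set R := max R₀ 1 with hRdef
  have hR1 : (1:ℝ) ≤ R := le_max_right _ _
  have hR0 : (0:ℝ) < R := by linarith
  refine ⟨16 * R ^ 3, by nlinarith [pow_pos hR0 3], 1 / R, one_div_pos.2 hR0, ?_⟩
  rintro α ⟨hα0, hαR⟩ z hz w hw D hD0 hcosh
  have hzR : ‖z‖ ≤ R := le_trans (hR₀ z hz) (le_max_left _ _)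
  have hwR : ‖w‖ ≤ R := le_trans (hR₀ w hw) (le_max_left _ _)
  set a := α * ‖z‖ with ha
  set b := α * ‖w‖ with hb
  set t := α * ‖z - w‖ with htdef
  set c := ((inner ℝ z w : ℝ)) / (‖z‖ * ‖w‖) with hcdef
  have hαR1 : α * R ≤ 1 := by
    have := (lt_div_iff₀ hR0).1 hαR
    linarith
  have hα1 : α ≤ 1 := by
    have h := mul_le_mul_of_nonneg_left hR1 hα0.le
    rw [mul_one] at h
    linarith
  have ha0 : 0 ≤ a := mul_nonneg hα0.le (norm_nonneg _)
  have hb0 : 0 ≤ b := mul_nonneg hα0.le (norm_nonneg _)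
  have ht0 : 0 ≤ t := mul_nonneg hα0.le (norm_nonneg _)
  have haR : a ≤ α * R := by rw [ha]; exact mul_le_mul_of_nonneg_left hzR hα0.le
  have hbR : b ≤ α * R := by rw [hb]; exact mul_le_mul_of_nonneg_left hwR hα0.le
  have ha1 : a ≤ 1 := haR.trans hαR1
  have hb1 : b ≤ 1 := hbR.trans hαR1
  have htR : t ≤ 2 * (α * R) := by
    have h1 : ‖z - w‖ ≤ ‖z‖ + ‖w‖ := norm_sub_le _ _
    have h2 := mul_le_mul_of_nonneg_left h1 hα0.le
    have h3 : ‖z‖ + ‖w‖ ≤ 2 * R := by linarith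
    have h4 := mul_le_mul_of_nonneg_left h3 hα0.le
    rw [htdef]; linarith
  have ht2 : t ≤ 2 := by linarith
  -- inner product identities
  have habc : a * b * c = α ^ 2 * (inner ℝ z w : ℝ) := by
    rw [ha, hb, hcdef]
    rcases eq_or_ne ‖z‖ 0 with h | h
    · simp [norm_eq_zero.1 h]
    rcases eq_or_ne ‖w‖ 0 with h' | h'
    · simp [norm_eq_zero.1 h']
    field_simp
  have ht2eq : t ^ 2 = (a - b) ^ 2 + 2 * (a * b - a * b * c) := by
    have hns : ‖z - w‖ ^ 2 = ‖z‖ ^ 2 - 2 * (inner ℝ z w : ℝ) + ‖w‖ ^ 2 := norm_sub_sq_real z w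
    have h1 : t ^ 2 = α ^ 2 * ‖z‖ ^ 2 - 2 * (α ^ 2 * (inner ℝ z w : ℝ)) + α ^ 2 * ‖w‖ ^ 2 := by
      rw [htdef, mul_pow, hns]; ring
    rw [h1, ← habc, ha, hb]; ring
  have hCS : a * b * c ≤ a * b := by
    have h1 := real_inner_le_norm z w
    have h2 : α ^ 2 * (inner ℝ z w : ℝ) ≤ α ^ 2 * (‖z‖ * ‖w‖) :=
      mul_le_mul_of_nonneg_left h1 (sq_nonneg α)
    rw [habc, ha, hb]; linarith
  have hs0 : 0 ≤ a * b - a * b * c := by linarith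
  -- rewrite the cosh equation
  have hcosh2 : Real.cosh D =
      Real.cosh (a - b) + (Real.sinh a * Real.sinh b - Real.sinh a * Real.sinh b * c) := by
    rw [hcosh, Real.cosh_sub]; ring
  -- key comparison of the sinh term with a*b terms
  have key1 : a * b - a * b * c ≤ Real.sinh a * Real.sinh b - Real.sinh a * Real.sinh b * c ∧
      Real.sinh a * Real.sinh b - Real.sinh a * Real.sinh b * c ≤
        (a * b - a * b * c) * (Real.cosh a * Real.cosh b) := by
    rcases eq_or_lt_of_le ha0 with h | hapos
    · rw [← h]; simp [Real.sinh_zero]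
    rcases eq_or_lt_of_le hb0 with h | hbpos
    · rw [← h]; simp [Real.sinh_zero]
    have hz0 : 0 < ‖z‖ := by
      rcases (norm_nonneg z).lt_or_eq with h' | h'
      · exact h'
      · exfalso; rw [ha, ← h', mul_zero] at hapos; exact lt_irrefl 0 hapos
    have hw0 : 0 < ‖w‖ := by
      rcases (norm_nonneg w).lt_or_eq with h' | h'
      · exact h'
      · exfalso; rw [hb, ← h', mul_zero] at hbpos; exact lt_irrefl 0 hbpos
    have hc1 : c ≤ 1 := by
      rw [hcdef, div_le_one (mul_pos hz0 hw0)]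
      exact real_inner_le_norm z w
    have hsa : a ≤ Real.sinh a := Real.self_le_sinh_iff.2 ha0
    have hsb : b ≤ Real.sinh b := Real.self_le_sinh_iff.2 hb0
    have hsa2 : Real.sinh a ≤ a * Real.cosh a := sinh_le_mul_cosh' ha0
    have hsb2 : Real.sinh b ≤ b * Real.cosh b := sinh_le_mul_cosh' hb0
    have hab : a * b ≤ Real.sinh a * Real.sinh b :=
      mul_le_mul hsa hsb hb0 (ha0.trans hsa)
    have hab2 : Real.sinh a * Real.sinh b ≤ (a * Real.cosh a) * (b * Real.cosh b) :=
      mul_le_mul hsa2 hsb2 (Real.sinh_nonneg_iff.2 hb0)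
        (mul_nonneg ha0 (Real.cosh_pos a).le)
    constructor
    · linarith [mul_nonneg (by linarith : (0:ℝ) ≤ Real.sinh a * Real.sinh b - a * b)
        (by linarith : (0:ℝ) ≤ 1 - c)]
    · linarith [mul_nonneg
        (by linarith : (0:ℝ) ≤ a * Real.cosh a * (b * Real.cosh b) - Real.sinh a * Real.sinh b)
        (by linarith : (0:ℝ) ≤ 1 - c)]
  -- auxiliary square bounds
  have huR : (a - b) ^ 2 ≤ (α * R) ^ 2 := by
    linarith [mul_nonneg ha0 (sub_nonneg.2 haR), mul_nonneg hb0 (sub_nonneg.2 hbR),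
      mul_nonneg (sub_nonneg.2 haR) (sub_nonneg.2 hbR), mul_nonneg ha0 hb0]
  have hu2 : (a - b) ^ 2 ≤ t ^ 2 := by linarith
  have habts : a * b - a * b * c ≤ t ^ 2 / 2 := by linarith [sq_nonneg (a - b)]
  -- upper bound for cosh D - cosh t
  have hup : Real.cosh D - Real.cosh t ≤ 3 * R ^ 2 * α ^ 2 * t ^ 2 := by
    have p1 : Real.cosh (a - b) ≤ 1 + (a - b) ^ 2 / 2 + (a - b) ^ 4 :=
      cosh_le_taylor' (by rw [abs_le]; constructor <;> linarith)
    have p2 : (a - b) ^ 4 ≤ t ^ 2 * (α * R) ^ 2 := by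
      linarith [mul_le_mul hu2 huR (sq_nonneg (a - b)) (sq_nonneg t)]
    have ca : Real.cosh a ≤ 1 + a ^ 2 :=
      cosh_le_one_add_sq' (by rw [abs_of_nonneg ha0]; exact ha1)
    have cb : Real.cosh b ≤ 1 + b ^ 2 :=
      cosh_le_one_add_sq' (by rw [abs_of_nonneg hb0]; exact hb1)
    have ha2 : a ^ 2 ≤ (α * R) ^ 2 := pow_le_pow_left₀ ha0 haR 2
    have hb21 : b ^ 2 ≤ 1 := by
      have := pow_le_pow_left₀ hb0 hb1 2
      simpa using this
    have hab4 : a ^ 2 * b ^ 2 ≤ (α * R) ^ 2 := by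
      have := mul_le_mul ha2 hb21 (sq_nonneg b) (sq_nonneg (α * R))
      simpa using this
    have hb2 : b ^ 2 ≤ (α * R) ^ 2 := pow_le_pow_left₀ hb0 hbR 2
    have p3 : Real.cosh a * Real.cosh b ≤ 1 + 3 * (α * R) ^ 2 := by
      have h1 : Real.cosh a * Real.cosh b ≤ (1 + a ^ 2) * (1 + b ^ 2) :=
        mul_le_mul ca cb (Real.cosh_pos b).le (by positivity)
      linarith [h1, ha2, hb2, hab4]
    have p4 : Real.sinh a * Real.sinh b - Real.sinh a * Real.sinh b * c ≤
        (a * b - a * b * c) + 3 * (α * R) ^ 2 * (t ^ 2 / 2) := by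
      have h1 := key1.2
      have h2 : (a * b - a * b * c) * (Real.cosh a * Real.cosh b) ≤
          (a * b - a * b * c) * (1 + 3 * (α * R) ^ 2) :=
        mul_le_mul_of_nonneg_left p3 hs0
      have h3 : (a * b - a * b * c) * (3 * (α * R) ^ 2) ≤ t ^ 2 / 2 * (3 * (α * R) ^ 2) :=
        mul_le_mul_of_nonneg_right habts (by positivity)
      linarith
    have p5 : 1 + t ^ 2 / 2 ≤ Real.cosh t := one_add_half_sq_le_cosh' t
    rw [hcosh2]
    linarith [p1, p2, p4, p5, ht2eq, sq_nonneg t, sq_nonneg (α * R * t)]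
  -- lower bound for cosh D - cosh t
  have hlow : Real.cosh t - Real.cosh D ≤ 4 * R ^ 2 * α ^ 2 * t ^ 2 := by
    have p1 : Real.cosh t ≤ 1 + t ^ 2 / 2 + t ^ 4 :=
      cosh_le_taylor' (by rw [abs_of_nonneg ht0]; exact ht2)
    have p2 : 1 + (a - b) ^ 2 / 2 ≤ Real.cosh (a - b) := one_add_half_sq_le_cosh' (a - b)
    have p3 : t ^ 4 ≤ t ^ 2 * (2 * (α * R)) ^ 2 := by
      have ht2sq : t ^ 2 ≤ (2 * (α * R)) ^ 2 := pow_le_pow_left₀ ht0 htR 2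
      have h := mul_le_mul_of_nonneg_left ht2sq (sq_nonneg t)
      linarith [h]
    rw [hcosh2]
    linarith [p1, p2, p3, key1.1, ht2eq]
  have habscosh : |Real.cosh D - Real.cosh t| ≤ 4 * R ^ 2 * α ^ 2 * t ^ 2 := by
    rw [abs_le]
    have h0 : (0:ℝ) ≤ R ^ 2 * α ^ 2 * t ^ 2 := by positivity
    constructor <;> linarith
  -- product identity and |D² - t²| bound
  have hid : Real.cosh D - Real.cosh t =
      2 * Real.sinh ((D + t) / 2) * Real.sinh ((D - t) / 2) := by
    have h2 : Real.cosh ((D + t) / 2 + (D - t) / 2) - Real.cosh ((D + t) / 2 - (D - t) / 2) =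
        2 * Real.sinh ((D + t) / 2) * Real.sinh ((D - t) / 2) := by
      rw [Real.cosh_add, Real.cosh_sub]; ring
    rw [show (D + t) / 2 + (D - t) / 2 = D by ring,
      show (D + t) / 2 - (D - t) / 2 = t by ring] at h2
    exact h2
  have hsp : (D + t) / 2 ≤ Real.sinh ((D + t) / 2) :=
    Real.self_le_sinh_iff.2 (by linarith)
  have hsp0 : 0 ≤ Real.sinh ((D + t) / 2) := Real.sinh_nonneg_iff.2 (by linarith)
  have hsq : |(D - t) / 2| ≤ |Real.sinh ((D - t) / 2)| := by
    rw [Real.abs_sinh]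
    exact Real.self_le_sinh_iff.2 (abs_nonneg _)
  have hDt : |D ^ 2 - t ^ 2| ≤ 8 * R ^ 2 * α ^ 2 * t ^ 2 := by
    have h1 : |D ^ 2 - t ^ 2| = (D + t) * |D - t| := by
      rw [← abs_of_nonneg (by linarith : (0:ℝ) ≤ D + t), ← abs_mul]
      congr 1; ring
    have h2 : (D + t) * |D - t| ≤
        (2 * Real.sinh ((D + t) / 2)) * (2 * |Real.sinh ((D - t) / 2)|) := by
      have hdt : |D - t| = 2 * |(D - t) / 2| := by
        rw [abs_div, abs_two]; ring
      rw [hdt]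
      have := mul_le_mul hsp hsq (abs_nonneg _) hsp0
      linarith
    have h3 : (2 * Real.sinh ((D + t) / 2)) * (2 * |Real.sinh ((D - t) / 2)|) =
        2 * |Real.cosh D - Real.cosh t| := by
      rw [hid, abs_mul, abs_mul, abs_two, abs_of_nonneg hsp0]; ring
    rw [h1]
    calc (D + t) * |D - t| ≤ 2 * |Real.cosh D - Real.cosh t| := by rw [← h3]; exact h2
      _ ≤ 8 * R ^ 2 * α ^ 2 * t ^ 2 := by linarith
  -- conclude
  rcases eq_or_lt_of_le ht0 with h | h
  · have hD2 : D ^ 2 ≤ 0 := by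
      have h1 := hDt
      rw [← h] at h1
      simp only [ne_eq, OfNat.ofNat_ne_zero, not_false_eq_true, zero_pow, mul_zero,
        sub_zero] at h1
      calc D ^ 2 ≤ |D ^ 2| := le_abs_self _
        _ ≤ 0 := h1
    have hDeq : D = 0 := by
      have hD20 : D ^ 2 = 0 := le_antisymm hD2 (sq_nonneg D)
      exact pow_eq_zero_iff (by norm_num) |>.1 hD20
    rw [hDeq, ← h]
    simp only [sub_zero, abs_zero]
    have := mul_nonneg (pow_nonneg hR0.le 3) (sq_nonneg α)
    linarith
  · have habs : |D - t| * t ≤ 8 * R ^ 2 * α ^ 2 * t ^ 2 := by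
      have h1 : |D - t| * (D + t) = |D ^ 2 - t ^ 2| := by
        rw [← abs_of_nonneg (by linarith : (0:ℝ) ≤ D + t), ← abs_mul]
        congr 1; ring
      have h2 : |D - t| * t ≤ |D - t| * (D + t) :=
        mul_le_mul_of_nonneg_left (by linarith) (abs_nonneg _)
      linarith [h1 ▸ h2, hDt]
    have h3 : |D - t| ≤ 8 * R ^ 2 * α ^ 2 * t := by
      have habs' : |D - t| * t ≤ (8 * R ^ 2 * α ^ 2 * t) * t := by linarith [habs]
      exact le_of_mul_le_mul_right habs' h
    have h4 : 8 * R ^ 2 * α ^ 2 * t ≤ 16 * R ^ 3 * α ^ 3 := by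
      have := mul_le_mul_of_nonneg_left htR (by positivity : (0:ℝ) ≤ 8 * R ^ 2 * α ^ 2)
      linarith
    have h5 : 16 * R ^ 3 * α ^ 3 ≤ 16 * R ^ 3 * α ^ 2 := by
      have hα2 : α ^ 3 ≤ α ^ 2 := by
        have h := mul_le_mul_of_nonneg_left hα1 (sq_nonneg α)
        rw [mul_one] at h
        linarith [h]
      have h6 := mul_le_mul_of_nonneg_left hα2
        (by linarith [pow_nonneg hR0.le 3] : (0:ℝ) ≤ 16 * R ^ 3)
      linarith [h6]
    linarith
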